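/- For every prime p with p ≥ 5, p divides the integer e₂({1, …, p−1}) = ∑_{1 ≤ i < j ≤ p−1} ∏_{k=1, k≠i, k≠j}^{p−1} k. -/

import Mathlib

/-- The second elementary symmetric product of a finite set of naturals, in ℤ:
`e₂(s) = ∑_{i,j ∈ s, i < j} ∏_{k ∈ s, k ≠ i, k ≠ j} k`. -/
def e2Prod (s : Finset ℕ) : ℤ :=
  ∑ i ∈ s, ∑ j ∈ s.filter (fun j => i < j), ∏ k ∈ (s.erase i).erase j, (k : ℤ)

section aux
open Finset
variable (p : ℕ) [Fact p.Prime]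

/-- reindex a sum over `Icc 1 (p-1)` to a sum over all of `ZMod p`, when `F 0 = 0`. -/
lemma reindex_sum (F : ZMod p → ZMod p) (hF : F 0 = 0) :
    ∑ i ∈ Icc 1 (p - 1), F (i : ZMod p) = ∑ x : ZMod p, F x := by
  have hp : 1 < p := (Fact.out : p.Prime).one_lt
  rw [← Finset.add_sum_erase _ F (Finset.mem_univ (0 : ZMod p)), hF, zero_add]
  refine Finset.sum_nbij' (fun i => (i : ZMod p)) (fun x => x.val) ?_ ?_ ?_ ?_ ?_
  · intro i hi
    simp only [Finset.mem_Icc] at hi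
    refine Finset.mem_erase.2 ⟨?_, Finset.mem_univ _⟩
    rw [Ne, ZMod.natCast_eq_zero_iff]
    intro hdvd
    have := Nat.le_of_dvd (by omega) hdvd
    omega
  · intro x hx
    have hx0 : x ≠ 0 := (Finset.mem_erase.1 hx).1
    have hv : x.val ≠ 0 := fun h => hx0 ((ZMod.val_eq_zero x).1 h)
    have hlt : x.val < p := x.val_lt
    simp only [Finset.mem_Icc]; omega
  · intro i hi
    simp only [Finset.mem_Icc] at hi
    exact ZMod.val_cast_of_lt (by omega)
  · intro x _
    show ((x.val : ZMod p)) = x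
    rw [ZMod.natCast_val, ZMod.cast_id]
  · intro i _; rfl

lemma inv_sum (F : ZMod p → ZMod p) :
    ∑ x : ZMod p, F x⁻¹ = ∑ x : ZMod p, F x := by
  refine Finset.sum_nbij' (fun x => x⁻¹) (fun x => x⁻¹) (fun _ _ => Finset.mem_univ _)
    (fun _ _ => Finset.mem_univ _) (fun x _ => inv_inv x) (fun x _ => inv_inv x)
    (fun x _ => rfl)

end aux


open Finset in
theorem prime_dvd_e2 (p : ℕ) (hp : p.Prime) (h5 : 5 ≤ p) :
    (p : ℤ) ∣ e2Prod (Finset.Icc 1 (p - 1)) := by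
  haveI : Fact p.Prime := ⟨hp⟩
  set s := Finset.Icc 1 (p - 1) with hs
  rw [← ZMod.intCast_zmod_eq_zero_iff_dvd]
  unfold e2Prod
  push_cast
  set K := ZMod p
  -- nonzero of elements
  have hne : ∀ i ∈ s, (i : K) ≠ 0 := by
    intro i hi
    simp only [hs, Finset.mem_Icc] at hi
    rw [Ne, ZMod.natCast_eq_zero_iff]
    intro hdvd
    have := Nat.le_of_dvd (by omega) hdvd
    omega
  -- product over all of s is -1 (Wilson)
  have hwilson : (∏ k ∈ s, (k : K)) = -1 := by
    rw [← Nat.cast_prod]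
    have : (∏ k ∈ s, k) = Nat.factorial (p - 1) := by
      rw [hs, ← Finset.prod_Ico_id_eq_factorial, ← Finset.Ico_add_one_right_eq_Icc]
    rw [this]
    exact ZMod.wilsons_lemma p
  -- each product term equals -(i⁻¹ j⁻¹)
  have hterm : ∀ i ∈ s, ∀ j ∈ s, i < j →
      (∏ k ∈ (s.erase i).erase j, (k : K)) = -((i : K)⁻¹ * (j : K)⁻¹) := by
    intro i hi j hj hij
    have hj' : j ∈ s.erase i := Finset.mem_erase.2 ⟨fun h => absurd h (by omega), hj⟩
    have hprod : (i : K) * ((j : K) * ∏ k ∈ (s.erase i).erase j, (k : K)) = -1 := by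
      rw [Finset.mul_prod_erase _ _ hj', Finset.mul_prod_erase _ _ hi, hwilson]
    have hi0 := hne i hi
    have hj0 := hne j hj
    apply mul_left_cancel₀ (mul_ne_zero hi0 hj0)
    rw [mul_neg, mul_mul_mul_comm, mul_inv_cancel₀ hi0, mul_inv_cancel₀ hj0, one_mul, ← hprod]
    ring
  calc ∑ i ∈ s, ∑ j ∈ s.filter (fun j => i < j), ∏ k ∈ (s.erase i).erase j, (k : K)
      = ∑ i ∈ s, ∑ j ∈ s.filter (fun j => i < j), -((i : K)⁻¹ * (j : K)⁻¹) := by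
        refine Finset.sum_congr rfl fun i hi => Finset.sum_congr rfl fun j hj => ?_
        rw [Finset.mem_filter] at hj
        exact hterm i hi j hj.1 hj.2
    _ = -(∑ i ∈ s, ∑ j ∈ s.filter (fun j => i < j), (i : K)⁻¹ * (j : K)⁻¹) := by
        simp [Finset.sum_neg_distrib]
    _ = 0 := by
        rw [neg_eq_zero]
        -- power sums vanish
        have hT : (∑ i ∈ s, (i : K)⁻¹) = 0 := by
          rw [hs, reindex_sum p (fun x => x⁻¹) (by simp), inv_sum p (fun x => x)]
          have h := FiniteField.sum_pow_lt_card_sub_one (ZMod p) 1 (by rw [ZMod.card]; omega)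
          simpa using h
        have hU : (∑ i ∈ s, (i : K)⁻¹ * (i : K)⁻¹) = 0 := by
          rw [hs, reindex_sum p (fun x => x⁻¹ * x⁻¹) (by simp), inv_sum p (fun x => x * x)]
          have h := FiniteField.sum_pow_lt_card_sub_one (ZMod p) 2 (by rw [ZMod.card]; omega)
          simpa [pow_two] using h
        have h2 : (2 : K) ≠ 0 := by
          rw [show (2 : K) = ((2 : ℕ) : K) by norm_num, Ne,
            ZMod.natCast_eq_zero_iff]
          intro h
          have := Nat.le_of_dvd (by norm_num) h
          omega
        have swap : (∑ i ∈ s, ∑ j ∈ s, if i < j then (i : K)⁻¹ * (j : K)⁻¹ else 0)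
            = ∑ i ∈ s, ∑ j ∈ s, if j < i then (i : K)⁻¹ * (j : K)⁻¹ else 0 := by
          rw [Finset.sum_comm]
          exact Finset.sum_congr rfl fun i _ => Finset.sum_congr rfl fun j _ => by
            split
            · exact mul_comm _ _
            · rfl
        have diag : (∑ i ∈ s, ∑ j ∈ s, if j = i then (i : K)⁻¹ * (j : K)⁻¹ else 0)
            = ∑ i ∈ s, (i : K)⁻¹ * (i : K)⁻¹ := by
          refine Finset.sum_congr rfl fun i hi => ?_
          rw [Finset.sum_ite_eq' s i (fun j => (i : K)⁻¹ * (j : K)⁻¹), if_pos hi]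
        have key : (∑ i ∈ s, (i : K)⁻¹) * (∑ j ∈ s, (j : K)⁻¹)
            = (∑ i ∈ s, ∑ j ∈ s, if i < j then (i : K)⁻¹ * (j : K)⁻¹ else 0)
              + ((∑ i ∈ s, ∑ j ∈ s, if j < i then (i : K)⁻¹ * (j : K)⁻¹ else 0)
                 + (∑ i ∈ s, ∑ j ∈ s, if j = i then (i : K)⁻¹ * (j : K)⁻¹ else 0)) := by
          rw [Finset.sum_mul_sum]
          simp only [← Finset.sum_add_distrib]
          refine Finset.sum_congr rfl fun i _ => Finset.sum_congr rfl fun j _ => ?_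
          rcases lt_trichotomy i j with h | h | h
          · simp [h, lt_asymm h, h.ne']
          · subst h; simp
          · simp [h, lt_asymm h, h.ne]
        rw [hT, zero_mul, ← swap, diag, hU, add_zero] at key
        simp only [Finset.sum_filter]
        have h2A : (2 : K) * (∑ i ∈ s, ∑ j ∈ s, if i < j then (i : K)⁻¹ * (j : K)⁻¹ else 0)
            = 0 := by
          rw [two_mul]
          exact key.symm
        rcases mul_eq_zero.1 h2A with h | h
        · exact absurd h h2
        · exact h
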